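/- There is no epimorphism from the pro-2 group G_l(2) = ⟨x₀, x₁, x₂, x₃ ∣ x₀⁴[x₀,x₁][x₂,x₃] = 1⟩ onto the finite group G of order 2^10 given by generators a, b, c with γ = [b,a], β = [c,a], α = [c,b] central of order 2, a² = α, b⁸ = c⁸ = 1. -/

import Mathlib

namespace Stmt5

/-- The commutator `[x,y] = x⁻¹y⁻¹xy` (the convention used in the paper). -/
def pc {H : Type*} [Group H] (x y : H) : H := x⁻¹ * y⁻¹ * x * y

def a : FreeGroup (Fin 3) := .of 0
def b : FreeGroup (Fin 3) := .of 1
def c : FreeGroup (Fin 3) := .of 2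

/-- Relations of the group `G` of order `2^10`: `γ = [b,a]`, `β = [c,a]`, `α = [c,b]`
are central of order 2, `a² = α`, `b⁸ = c⁸ = 1`. -/
def rels : Set (FreeGroup (Fin 3)) :=
  { pc (pc b a) a, pc (pc b a) b, pc (pc b a) c,
    pc (pc c a) a, pc (pc c a) b, pc (pc c a) c,
    pc (pc c b) a, pc (pc c b) b, pc (pc c b) c,
    (pc b a) ^ 2, (pc c a) ^ 2, (pc c b) ^ 2,
    a ^ 2 * (pc c b)⁻¹, b ^ 8, c ^ 8 }

/-- The group `G` of order `2^10`. -/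
abbrev G10 := PresentedGroup rels

def x (i : Fin 4) : FreeGroup (Fin 4) := .of i

/-- The single relation `x₀⁴[x₀,x₁][x₂,x₃] = 1` of the (pro-2) group `G_l(2)` of the
maximal pro-2 extension of `ℚ₂(√-1)`. -/
def rel5 : Set (FreeGroup (Fin 4)) := { x 0 ^ 4 * pc (x 0) (x 1) * pc (x 2) (x 3) }

/-! ### An auxiliary finite group `K` of order 64, a quotient of the target group. -/

def e2 : ZMod 2 → ZMod 4 := fun z => 2 * z.val
def r2 : ZMod 4 →+* ZMod 2 := ZMod.castHom (show 2 ∣ 4 by norm_num) (ZMod 2)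
lemma e2_add : ∀ u v : ZMod 2, e2 (u + v) = e2 u + e2 v := by decide
lemma r2_e2 : ∀ u : ZMod 2, r2 (e2 u) = 0 := by decide

structure K where
  i : ZMod 4
  j : ZMod 2
  k : ZMod 2
  s : ZMod 2
  t : ZMod 2
deriving DecidableEq, Fintype

instance : Mul K := ⟨fun x y => ⟨x.i + y.i + e2 (x.k * y.j), x.j + y.j, x.k + y.k,
    x.s + y.s + x.k * r2 y.i, x.t + y.t + x.j * r2 y.i⟩⟩
instance : One K := ⟨⟨0,0,0,0,0⟩⟩
instance : Inv K := ⟨fun x => ⟨-x.i + e2 (x.k * x.j), -x.j, -x.k,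
    -x.s + x.k * r2 x.i, -x.t + x.j * r2 x.i⟩⟩
lemma K.mul_def (x y : K) : x * y = ⟨x.i + y.i + e2 (x.k * y.j), x.j + y.j, x.k + y.k,
    x.s + y.s + x.k * r2 y.i, x.t + y.t + x.j * r2 y.i⟩ := rfl

instance : Group K where
  mul_assoc x y z := by
    simp only [K.mul_def, K.mk.injEq, add_mul, mul_add, e2_add, map_add, r2_e2]
    refine ⟨by ring, by ring, by ring, by ring, by ring⟩
  one_mul := by decide
  mul_one := by decide
  inv_mul_cancel := by decide

abbrev V := ZMod 2 × ZMod 2 × ZMod 2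
def rep : V → K := fun v => ⟨(v.1.val : ZMod 4), v.2.1, v.2.2, 0, 0⟩
def cls : K → V := fun x => (r2 x.i, x.j, x.k)
def dot : V → V → ZMod 2 := fun l v => l.1 * v.1 + l.2.1 * v.2.1 + l.2.2 * v.2.2
/-- central elements with trivial class -/
def zel : ZMod 2 → ZMod 2 → ZMod 2 → K := fun u s t => ⟨e2 u, 0, 0, s, t⟩
/-- the class of the commutator `pc (rep v) (rep w)`, as a vector of exponents of `(α,β,γ)`. -/
def comE : V → V → V := fun v w =>
  (v.2.2 * w.2.1 + v.2.1 * w.2.2, v.2.2 * w.1 + v.1 * w.2.2, v.2.1 * w.1 + v.1 * w.2.1)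

lemma pow4 : ∀ x : K, x ^ 4 = 1 := by decide
lemma zel_comm : ∀ u s t : ZMod 2, ∀ g : K, zel u s t * g = g * zel u s t := by decide
lemma decomp : ∀ x : K, ∃ u s t : ZMod 2, x = rep (cls x) * zel u s t := by decide
lemma pcrep : ∀ v w : V, pc (rep v) (rep w) = zel (comE v w).1 (comE v w).2.1 (comE v w).2.2 := by
  decide
lemma zel_mul_eq_one : ∀ p q : V,
    (zel p.1 p.2.1 p.2.2 * zel q.1 q.2.1 q.2.2 = 1) ↔ p + q = 0 := by decide

/-- `pc` is unchanged when multiplying the right argument by a central element. -/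
lemma pc_central_right {G : Type*} [Group G] (p q w : G) (hw : ∀ g, w * g = g * w) :
    pc p (q * w) = pc p q := by
  have hwi : ∀ g : G, w⁻¹ * g = g * w⁻¹ := fun g => by
    calc w⁻¹ * g = w⁻¹ * g * w * w⁻¹ := by group
    _ = w⁻¹ * (w * g) * w⁻¹ := by rw [hw g]; group
    _ = g * w⁻¹ := by group
  simp only [pc, mul_inv_rev, mul_assoc]
  rw [hwi]
  group

lemma pc_central_left {G : Type*} [Group G] (p q z : G) (hz : ∀ g, z * g = g * z) :
    pc (p * z) q = pc p q := by
  have hzi : ∀ g : G, z⁻¹ * g = g * z⁻¹ := fun g => by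
    calc z⁻¹ * g = z⁻¹ * g * z * z⁻¹ := by group
    _ = z⁻¹ * (z * g) * z⁻¹ := by rw [hz g]; group
    _ = g * z⁻¹ := by group
  simp only [pc, mul_inv_rev, mul_assoc]
  rw [hzi, hz]
  group

lemma pc_cls (x y : K) : pc x y = pc (rep (cls x)) (rep (cls y)) := by
  obtain ⟨u, s, t, hx⟩ := decomp x
  obtain ⟨u', s', t', hy⟩ := decomp y
  calc pc x y = pc (rep (cls x) * zel u s t) (rep (cls y) * zel u' s' t') := by rw [← hx, ← hy]
  _ = pc (rep (cls x) * zel u s t) (rep (cls y)) := pc_central_right _ _ _ (zel_comm u' s' t')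
  _ = pc (rep (cls x)) (rep (cls y)) := pc_central_left _ _ _ (zel_comm u s t)

set_option synthInstance.maxSize 2000 in
set_option synthInstance.maxHeartbeats 2000000 in
set_option maxRecDepth 10000 in
set_option maxHeartbeats 2000000 in
lemma keyD : ∀ v₀ v₁ v₂ v₃ : V, v₀.2.1 = 0 → v₀.2.2 = 0 →
    comE v₀ v₁ + comE v₂ v₃ = 0 →
    ∃ l : V, l ≠ 0 ∧ dot l v₀ = 0 ∧ dot l v₁ = 0 ∧ dot l v₂ = 0 ∧ dot l v₃ = 0 := by decide

/-! ### Homomorphisms out of `G10`. -/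

lemma map_pc {G H : Type*} [Group G] [Group H] (φ : G →* H) (u v : G) :
    φ (pc u v) = pc (φ u) (φ v) := by simp [pc]

def aK : K := ⟨1,0,0,0,0⟩
def bK : K := ⟨0,1,0,0,0⟩
def cK : K := ⟨0,0,1,0,0⟩
def fK : Fin 3 → K := ![aK, bK, cK]

lemma hK : ∀ r ∈ rels, FreeGroup.lift fK r = 1 := by
  intro r hr
  simp only [rels, Set.mem_insert_iff, Set.mem_singleton_iff] at hr
  rcases hr with rfl|rfl|rfl|rfl|rfl|rfl|rfl|rfl|rfl|rfl|rfl|rfl|rfl|rfl|rfl <;>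
    simp only [pc, a, b, c, map_mul, map_inv, map_pow, FreeGroup.lift_apply_of] <;> decide

def π : G10 →* K := PresentedGroup.toGroup hK
lemma π_of (n : Fin 3) : π (PresentedGroup.of n) = fK n := PresentedGroup.toGroup.of hK

def f2 : Fin 3 → Multiplicative (ZMod 8) := fun n => Multiplicative.ofAdd (if n = 1 then 1 else 0)
def f3 : Fin 3 → Multiplicative (ZMod 8) := fun n => Multiplicative.ofAdd (if n = 2 then 1 else 0)

lemma h2rel : ∀ r ∈ rels, FreeGroup.lift f2 r = 1 := by
  intro r hr
  simp only [rels, Set.mem_insert_iff, Set.mem_singleton_iff] at hr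
  rcases hr with rfl|rfl|rfl|rfl|rfl|rfl|rfl|rfl|rfl|rfl|rfl|rfl|rfl|rfl|rfl <;>
    simp only [pc, a, b, c, map_mul, map_inv, map_pow, FreeGroup.lift_apply_of] <;> decide

lemma h3rel : ∀ r ∈ rels, FreeGroup.lift f3 r = 1 := by
  intro r hr
  simp only [rels, Set.mem_insert_iff, Set.mem_singleton_iff] at hr
  rcases hr with rfl|rfl|rfl|rfl|rfl|rfl|rfl|rfl|rfl|rfl|rfl|rfl|rfl|rfl|rfl <;>
    simp only [pc, a, b, c, map_mul, map_inv, map_pow, FreeGroup.lift_apply_of] <;> decide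

def h2 : G10 →* Multiplicative (ZMod 8) := PresentedGroup.toGroup h2rel
def h3 : G10 →* Multiplicative (ZMod 8) := PresentedGroup.toGroup h3rel

def jH : K →* Multiplicative (ZMod 2) where
  toFun x := Multiplicative.ofAdd x.j
  map_one' := rfl
  map_mul' _ _ := rfl

def kH : K →* Multiplicative (ZMod 2) where
  toFun x := Multiplicative.ofAdd x.k
  map_one' := rfl
  map_mul' _ _ := rfl

lemma cls_mul (x y : K) : cls (x * y) = cls x + cls y := by
  simp only [cls, K.mul_def, map_add, r2_e2, Prod.mk_add_mk, add_zero]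

def clsH : K →* Multiplicative V where
  toFun x := Multiplicative.ofAdd (cls x)
  map_one' := by show Multiplicative.ofAdd (cls 1) = 1; rfl
  map_mul' x y := by
    show Multiplicative.ofAdd (cls (x * y)) = Multiplicative.ofAdd (cls x + cls y)
    rw [cls_mul]

def dotH (l : V) : Multiplicative V →* Multiplicative (ZMod 2) where
  toFun v := Multiplicative.ofAdd (dot l v.toAdd)
  map_one' := by show Multiplicative.ofAdd (dot l 0) = 1; simp [dot]
  map_mul' v w := by
    show Multiplicative.ofAdd (dot l (v.toAdd + w.toAdd))
      = Multiplicative.ofAdd (dot l v.toAdd + dot l w.toAdd)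
    simp only [dot, Prod.fst_add, Prod.snd_add]
    congr 1
    ring

def m82 : Multiplicative (ZMod 8) →* Multiplicative (ZMod 2) :=
  AddMonoidHom.toMultiplicative ((ZMod.castHom (show 2 ∣ 8 by norm_num) (ZMod 2)).toAddMonoidHom)

lemma jπ_eq : jH.comp π = m82.comp h2 := by
  apply PresentedGroup.ext
  intro n
  simp only [MonoidHom.comp_apply, π, h2, PresentedGroup.toGroup.of]
  fin_cases n <;> decide

lemma kπ_eq : kH.comp π = m82.comp h3 := by
  apply PresentedGroup.ext
  intro n
  simp only [MonoidHom.comp_apply, π, h3, PresentedGroup.toGroup.of]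
  fin_cases n <;> decide

lemma pc_comm {A : Type*} [CommGroup A] (u v : A) : pc u v = 1 := by
  simp [pc, mul_comm, mul_left_comm, mul_assoc]

lemma par8 : ∀ z : Multiplicative (ZMod 8), z ^ 4 = 1 →
    (ZMod.castHom (show 2 ∣ 8 by norm_num) (ZMod 2)) z.toAdd = 0 := by decide

lemma lne : ∀ l : V, l ≠ 0 → dot l (1,0,0) = 1 ∨ dot l (0,1,0) = 1 ∨ dot l (0,0,1) = 1 := by
  decide

lemma relP5 : (PresentedGroup.of 0 : PresentedGroup rel5) ^ 4 *
    pc (PresentedGroup.of 0) (PresentedGroup.of 1) *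
    pc (PresentedGroup.of 2) (PresentedGroup.of 3) = 1 := by
  have hmem : x 0 ^ 4 * pc (x 0) (x 1) * pc (x 2) (x 3) ∈ Subgroup.normalClosure rel5 :=
    Subgroup.subset_normalClosure rfl
  have h1 : PresentedGroup.mk rel5 (x 0 ^ 4 * pc (x 0) (x 1) * pc (x 2) (x 3)) = 1 :=
    (QuotientGroup.eq_one_iff _).mpr hmem
  simp only [map_mul, map_pow, map_pc] at h1
  exact h1

/-- There is no epimorphism from the one-relator group
`⟨x₀,x₁,x₂,x₃ ∣ x₀⁴[x₀,x₁][x₂,x₃] = 1⟩` (the presentation of the pro-2 Galois group of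
`ℚ₂(√−1)`) onto the group `G` of order `2^10` above. -/
theorem stmt_5 : ¬ ∃ f : PresentedGroup rel5 →* G10, Function.Surjective f := by
  rintro ⟨f, hf⟩
  -- the images of the four generators in K and their classes
  -- relation in K
  have hrel := congrArg (π.comp f) relP5
  simp only [map_mul, map_pow, map_pc, map_one, MonoidHom.comp_apply] at hrel
  rw [pow4, one_mul, pc_cls (π (f (.of 0))) (π (f (.of 1))),
    pc_cls (π (f (.of 2))) (π (f (.of 3))), pcrep, pcrep, zel_mul_eq_one] at hrel
  -- parity constraints
  have hq2 : (h2 (f (.of 0))) ^ 4 = 1 := by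
    have h := congrArg (h2.comp f) relP5
    simpa only [map_mul, map_pow, map_pc, map_one, MonoidHom.comp_apply, pc_comm,
      mul_one] using h
  have hq3 : (h3 (f (.of 0))) ^ 4 = 1 := by
    have h := congrArg (h3.comp f) relP5
    simpa only [map_mul, map_pow, map_pc, map_one, MonoidHom.comp_apply, pc_comm,
      mul_one] using h
  have hj : (cls (π (f (.of 0)))).2.1 = 0 := by
    have e1 := DFunLike.congr_fun jπ_eq (f (.of 0))
    simp only [MonoidHom.comp_apply] at e1
    have e2 : (π (f (.of 0))).j = Multiplicative.toAdd (m82 (h2 (f (.of 0)))) :=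
      congrArg Multiplicative.toAdd e1
    rw [show (cls (π (f (.of 0)))).2.1 = (π (f (.of 0))).j from rfl, e2]
    exact par8 _ hq2
  have hk : (cls (π (f (.of 0)))).2.2 = 0 := by
    have e1 := DFunLike.congr_fun kπ_eq (f (.of 0))
    simp only [MonoidHom.comp_apply] at e1
    have e2 : (π (f (.of 0))).k = Multiplicative.toAdd (m82 (h3 (f (.of 0)))) :=
      congrArg Multiplicative.toAdd e1
    rw [show (cls (π (f (.of 0)))).2.2 = (π (f (.of 0))).k from rfl, e2]
    exact par8 _ hq3
  -- the functional
  obtain ⟨l, hl0, hd0, hd1, hd2, hd3⟩ := keyD (cls (π (f (.of 0)))) (cls (π (f (.of 1))))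
    (cls (π (f (.of 2)))) (cls (π (f (.of 3)))) hj hk hrel
  -- the character
  set χ : PresentedGroup rel5 →* Multiplicative (ZMod 2) :=
    ((dotH l).comp clsH).comp (π.comp f) with hχdef
  have hχ1 : χ = 1 := by
    apply PresentedGroup.ext
    intro n
    have hval : χ (.of n) = Multiplicative.ofAdd (dot l (cls (π (f (.of n))))) := rfl
    have hz : dot l (cls (π (f (.of n)))) = 0 := by
      fin_cases n
      · exact hd0
      · exact hd1
      · exact hd2
      · exact hd3
    rw [hval, hz]
    rfl
  -- contradiction with surjectivity
  have hcl0 : cls (π (PresentedGroup.of (0 : Fin 3))) = (1,0,0) := by rw [π_of]; rfl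
  have hcl1 : cls (π (PresentedGroup.of (1 : Fin 3))) = (0,1,0) := by rw [π_of]; rfl
  have hcl2 : cls (π (PresentedGroup.of (2 : Fin 3))) = (0,0,1) := by rw [π_of]; rfl
  have key : ∀ n : Fin 3, dot l (cls (π (PresentedGroup.of n))) = 0 := by
    intro n
    obtain ⟨y, hy⟩ := hf (PresentedGroup.of n)
    have hv : χ y = Multiplicative.ofAdd (dot l (cls (π (f y)))) := rfl
    rw [hχ1, MonoidHom.one_apply, hy] at hv
    have := congrArg Multiplicative.toAdd hv
    simpa using this.symm
  rcases lne l hl0 with h|h|h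
  · have h0 := key 0; rw [hcl0, h] at h0; exact absurd h0 (by decide)
  · have h0 := key 1; rw [hcl1, h] at h0; exact absurd h0 (by decide)
  · have h0 := key 2; rw [hcl2, h] at h0; exact absurd h0 (by decide)

end Stmt5
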